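/- For all s, t ∈ V with s ≠ t, writing d*(s,t) = d(s,u) + ω'(u,v) + d(v,t), the new number of shortest paths satisfies the trichotomy: if d*(s,t) < d(s,t) then σ'_{st} = σ_{su} · σ_{vt}; if d*(s,t) = d(s,t) < ∞ then σ'_{st} = σ_{st} + σ_{su} · σ_{vt}; and if d*(s,t) > d(s,t) then σ'_{st} = σ_{st}. -/

import Mathlib

open scoped BigOperators

/-- A directed graph on vertex set `V` with positive real edge weights. -/
structure WDigraph (V : Type*) where
  /-- the edge relation -/
  E : V → V → Prop
  /-- the edge weights -/
  w : V → V → ℝ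
  /-- weights of edges are positive -/
  pos : ∀ a b, E a b → 0 < w a b

namespace WDigraph

variable {V : Type*} [Fintype V] [DecidableEq V]

/-- `p` is a simple path from `s` to `t` in `G`: a nonempty list of pairwise
distinct vertices starting at `s`, ending at `t`, consecutive vertices joined
by edges. (Since all weights are positive, every shortest path is simple, so
it suffices to consider simple paths throughout.) -/
def IsPath (G : WDigraph V) (s t : V) (p : List V) : Prop :=
  List.Chain' G.E p ∧ p.head? = some s ∧ p.getLast? = some t ∧ p.Nodup

/-- The total weight of a list of vertices (sum of the weights of consecutive pairs). -/
def pw (G : WDigraph V) : List V → ℝ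
  | [] => 0
  | [_] => 0
  | a :: b :: r => G.w a b + G.pw (b :: r)

/-- `d(s,t)`: shortest-path distance from `s` to `t`, equal to `⊤` (infinity)
if `t` is unreachable from `s`. -/
noncomputable def dist (G : WDigraph V) (s t : V) : EReal :=
  sInf ((fun p => (G.pw p : EReal)) '' {p | G.IsPath s t p})

/-- The set of shortest `s`-`t` paths in `G`. -/
def SP (G : WDigraph V) (s t : V) : Set (List V) :=
  {p | G.IsPath s t p ∧ (G.pw p : EReal) = G.dist s t}

/-- `σ_{st}`: the number of shortest `s`-`t` paths in `G`. -/
noncomputable def sigma (G : WDigraph V) (s t : V) : ℕ :=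
  (G.SP s t).ncard

/-- `σ_{st}(v)`: the number of shortest `s`-`t` paths in `G` that contain `v`. -/
noncomputable def sigmaV (G : WDigraph V) (s t v : V) : ℕ :=
  {p ∈ G.SP s t | v ∈ p}.ncard

/-- `σ_{st}(v,w)`: the number of shortest `s`-`t` paths in `G` using the edge `(v,w)`. -/
noncomputable def sigmaE (G : WDigraph V) (s t v w : V) : ℕ :=
  {p ∈ G.SP s t | [v, w] <:+: p}.ncard

/-- `P_s(t)`: the set of predecessors of `t` with respect to source `s`:
nodes `y` with `(y,t) ∈ E` and `d(s,y) + ω(y,t) = d(s,t) < ∞`. -/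
def pred (G : WDigraph V) (s t : V) : Set V :=
  {y | G.E y t ∧ G.dist s y + (G.w y t : EReal) = G.dist s t ∧ G.dist s t < ⊤}

/-- `δ_{s•}(v)`: Brandes's one-sided dependency of `s` on `v`
(a summand is `0` whenever its denominator is `0`, which is automatic since
in Lean division by zero yields zero). -/
noncomputable def delta (G : WDigraph V) (s v : V) : ℝ :=
  ∑ᶠ t ∈ {t : V | t ≠ s ∧ t ≠ v}, (G.sigmaV s t v : ℝ) / (G.sigma s t : ℝ)

/-- `c_B(v)`: the betweenness centrality of `v`. -/
noncomputable def bc (G : WDigraph V) (v : V) : ℝ :=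
  ∑ᶠ s ∈ {s : V | s ≠ v}, G.delta s v

/-- `G'` is obtained from `G` by the incremental update `(u, v, ω'(u,v))`:
either a new edge `(u,v) ∉ E` is inserted with positive weight, or the weight
of the existing edge `(u,v)` is decreased; all other edges and weights are
unchanged. (Positivity of all weights is part of the `WDigraph` structure.) -/
structure IsUpdate (G G' : WDigraph V) (u v : V) : Prop where
  /-- the updated edge is present in `G'` -/
  edge' : G'.E u v
  /-- `E' = E ∪ {(u,v)}` -/
  edge_iff : ∀ a b, G'.E a b ↔ G.E a b ∨ a = u ∧ b = v
  /-- `ω'` agrees with `ω` on all edges other than `(u,v)` -/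
  weight_eq : ∀ a b, ¬(a = u ∧ b = v) → G'.w a b = G.w a b
  /-- either an insertion of a new edge, or a weight decrease of an existing one -/
  insert_or_decrease : ¬ G.E u v ∨ (G.E u v ∧ G'.w u v < G.w u v)

/-- `S(t)`: the affected sources of `t`. -/
def affS (G G' : WDigraph V) (t : V) : Set V :=
  {s | G.dist s t > G'.dist s t ∨ G.sigma s t ≠ G'.sigma s t}

/-- `T(s)`: the affected targets of `s`. -/
def affT (G G' : WDigraph V) (s : V) : Set V :=
  {t | G.dist s t > G'.dist s t ∨ G.sigma s t ≠ G'.sigma s t}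

/-- `Δ_{s•}(v) = Σ_{t ∈ T(s), t ≠ v} σ_{st}(v)/σ_{st}`, computed in `G`
(`0`-convention for zero denominators). -/
noncomputable def Delta (G G' : WDigraph V) (s v : V) : ℝ :=
  ∑ᶠ t ∈ {t : V | t ∈ affT G G' s ∧ t ≠ v}, (G.sigmaV s t v : ℝ) / (G.sigma s t : ℝ)

/-- `Δ'_{s•}(v) = Σ_{t ∈ T(s), t ≠ v} σ'_{st}(v)/σ'_{st}`, computed in `G'`
(`0`-convention for zero denominators). -/
noncomputable def Delta' (G G' : WDigraph V) (s v : V) : ℝ :=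
  ∑ᶠ t ∈ {t : V | t ∈ affT G G' s ∧ t ≠ v}, (G'.sigmaV s t v : ℝ) / (G'.sigma s t : ℝ)


section Aux
set_option linter.unusedSectionVars false

theorem exists_dup {α : Type*} : ∀ {l : List α}, ¬ l.Nodup → ∃ (a : List α) (x : α) (b c : List α), l = a ++ x :: (b ++ x :: c)
  | [], h => absurd List.nodup_nil h
  | y :: l, h => by
    by_cases hy : y ∈ l
    · obtain ⟨b, c, rfl⟩ := List.append_of_mem hy
      exact ⟨[], y, b, c, rfl⟩
    · have hl : ¬ l.Nodup := fun hn => h (List.nodup_cons.mpr ⟨hy, hn⟩)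
      obtain ⟨a, x, b, c, rfl⟩ := exists_dup hl
      exact ⟨y :: a, x, b, c, rfl⟩

variable {G G' : WDigraph V} {u v s t x y : V} {p q p₁ p₂ q₁ q₂ : List V}

theorem pw_nil (G : WDigraph V) : G.pw [] = 0 := rfl
theorem pw_singleton (G : WDigraph V) (a : V) : G.pw [a] = 0 := rfl
theorem pw_cons_cons (G : WDigraph V) (a b : V) (r : List V) :
    G.pw (a :: b :: r) = G.w a b + G.pw (b :: r) := rfl

theorem pw_nonneg (G : WDigraph V) : ∀ {p : List V}, List.Chain' G.E p → 0 ≤ G.pw p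
  | [], _ => le_refl _
  | [_], _ => le_refl _
  | a :: b :: r, h => by
      simp only [List.Chain', List.isChain_cons_cons] at h
      rw [pw_cons_cons]
      exact add_nonneg (G.pos a b h.1).le (pw_nonneg G h.2)

theorem pw_append_cons (G : WDigraph V) :
    ∀ (p : List V) (x : V) (q : List V),
      G.pw (p ++ x :: q) = G.pw (p ++ [x]) + G.pw (x :: q)
  | [], x, q => by simp [pw_singleton]
  | [a], x, q => by
      simp only [List.cons_append, List.nil_append, pw_cons_cons, pw_singleton]
      ring
  | a :: b :: r, x, q => by
      have ih := pw_append_cons G (b :: r) x q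
      simp only [List.cons_append, pw_cons_cons] at ih ⊢
      rw [ih]; ring

theorem pw_concat (G : WDigraph V) :
    ∀ {p : List V} {x : V}, p.getLast? = some x → ∀ (y : V),
      G.pw (p ++ [y]) = G.pw p + G.w x y
  | [], x, h => by simp at h
  | [a], x, h => by
      simp only [List.getLast?_singleton, Option.some.injEq] at h
      subst h
      intro y; simp [pw_cons_cons, pw_singleton]
  | a :: b :: r, x, h => by
      intro y
      rw [List.getLast?_cons_cons] at h
      have ih := pw_concat G (p := b :: r) h y
      simp only [List.cons_append, pw_cons_cons] at ih ⊢
      rw [ih]; ring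

theorem pw_append (G : WDigraph V) (hp : p.getLast? = some x) (hq : q.head? = some y) :
    G.pw (p ++ q) = G.pw p + G.w x y + G.pw q := by
  obtain ⟨q', rfl⟩ := List.head?_eq_some_iff.1 hq
  rw [pw_append_cons, pw_concat G hp y]

/-- From any walk (chain) one can extract a simple path with no larger weight. -/
theorem exists_path_le (G : WDigraph V) :
    ∀ (n : ℕ) (p : List V), p.length ≤ n → List.Chain' G.E p →
      p.head? = some s → p.getLast? = some t →
      ∃ q, G.IsPath s t q ∧ G.pw q ≤ G.pw p := by
  intro n
  induction n with
  | zero =>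
    intro p hn hc hs ht
    have : p = [] := List.eq_nil_of_length_eq_zero (Nat.le_zero.1 hn)
    subst this; simp at hs
  | succ n ih =>
    intro p hn hc hs ht
    by_cases hnd : p.Nodup
    · exact ⟨p, ⟨hc, hs, ht, hnd⟩, le_refl _⟩
    · obtain ⟨a, x, b, c, hp⟩ := exists_dup hnd
      rw [hp] at hc hs ht hn
      have hc0 := hc
      have hs0 := hs
      have ht0 := ht
      have hsplit := (List.isChain_append (R := G.E) (l₁ := a) (l₂ := x :: (b ++ x :: c))).1 hc0
      have hc2 : List.Chain' G.E (x :: c) := by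
        refine hsplit.2.1.suffix ?_
        exact ⟨x :: b, rfl⟩
      have hc' : List.Chain' G.E (a ++ x :: c) := by
        refine List.isChain_append.2 ⟨hsplit.1, hc2, ?_⟩
        intro z hz w hw
        simp only [List.head?_cons, Option.mem_def, Option.some.injEq] at hw
        subst hw
        exact hsplit.2.2 z hz x rfl
      have hs' : (a ++ x :: c).head? = some s := by
        cases a with
        | nil => simpa using hs0
        | cons a0 a' => simpa using hs0
      have ht' : (a ++ x :: c).getLast? = some t := by
        rw [List.getLast?_append_cons, ← List.cons_append, List.getLast?_append_cons] at ht0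
        rw [List.getLast?_append_cons]
        exact ht0
      have hlen : (a ++ x :: c).length ≤ n := by
        simp only [List.length_append, List.length_cons] at hn ⊢
        omega
      obtain ⟨q, hq, hle⟩ := ih (a ++ x :: c) hlen hc' hs' ht'
      refine ⟨q, hq, hle.trans ?_⟩
      rw [hp]
      have e1 : G.pw (a ++ x :: c) = G.pw (a ++ [x]) + G.pw (x :: c) := pw_append_cons G a x c
      have h3 : G.pw (a ++ x :: (b ++ x :: c)) = G.pw (a ++ [x]) + G.pw (x :: (b ++ x :: c)) :=
        pw_append_cons G a x (b ++ x :: c)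
      have h4 : G.pw ((x :: b) ++ x :: c) = G.pw ((x :: b) ++ [x]) + G.pw (x :: c) :=
        pw_append_cons G (x :: b) x c
      have h4' : G.pw (x :: (b ++ x :: c)) = G.pw ((x :: b) ++ [x]) + G.pw (x :: c) := h4
      have h5 : 0 ≤ G.pw ((x :: b) ++ [x]) := by
        refine pw_nonneg G (hsplit.2.1.prefix ?_)
        exact ⟨c, by simp⟩
      have e2 : G.pw (a ++ x :: (b ++ x :: c))
          = G.pw (a ++ [x]) + (G.pw ((x :: b) ++ [x]) + G.pw (x :: c)) := by
        rw [h3, h4']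
      rw [e1, e2]
      nlinarith [h5]
termination_by n => n

theorem paths_finite (G : WDigraph V) (s t : V) : {p | G.IsPath s t p}.Finite := by
  refine (List.finite_length_le V (Fintype.card V)).subset ?_
  intro p hp
  exact hp.2.2.2.length_le_card

theorem sp_finite (G : WDigraph V) (s t : V) : (G.SP s t).Finite :=
  (G.paths_finite s t).subset fun _ hp => hp.1

theorem dist_le (G : WDigraph V) {s t : V} {p : List V} (hp : G.IsPath s t p) :
    G.dist s t ≤ (G.pw p : EReal) :=
  sInf_le ⟨p, hp, rfl⟩

theorem sp_dist {p : List V} (hp : p ∈ G.SP s t) : G.dist s t = (G.pw p : EReal) := hp.2.symm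

theorem exists_sp (G : WDigraph V) {s t : V} {p : List V} (hp : G.IsPath s t p) :
    ∃ q, q ∈ G.SP s t := by
  have hne : ((fun p => (G.pw p : EReal)) '' {p | G.IsPath s t p}).Nonempty := ⟨_, p, hp, rfl⟩
  have hfin : ((fun p => (G.pw p : EReal)) '' {p | G.IsPath s t p}).Finite :=
    (G.paths_finite s t).image _
  obtain ⟨q, hq, hq2⟩ := hne.csInf_mem hfin
  exact ⟨q, hq, hq2⟩

theorem dist_eq_top (G : WDigraph V) {s t : V} (h : ∀ p, ¬ G.IsPath s t p) :
    G.dist s t = ⊤ := by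
  have : {p | G.IsPath s t p} = ∅ := Set.eq_empty_iff_forall_notMem.2 h
  rw [dist, this, Set.image_empty, sInf_empty]

theorem dist_lt_top_iff (G : WDigraph V) {s t : V} :
    G.dist s t < ⊤ ↔ ∃ p, p ∈ G.SP s t := by
  constructor
  · intro hd
    by_contra hno
    refine absurd (G.dist_eq_top (s := s) (t := t) fun p hp => ?_) (by intro hh; rw [hh] at hd; exact lt_irrefl _ hd)
    exact hno (G.exists_sp hp)
  · rintro ⟨p, hp⟩
    rw [sp_dist hp]
    exact EReal.coe_lt_top _

theorem IsUpdate.w_pos (h : IsUpdate G G' u v) : 0 < G'.w u v := G'.pos u v h.edge'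

theorem pw_eq_of_not_infix (h : IsUpdate G G' u v) :
    ∀ {p : List V}, ¬ ([u, v] <:+: p) → G'.pw p = G.pw p
  | [], _ => rfl
  | [_], _ => rfl
  | a :: b :: r, hni => by
      have h1 : ¬ (a = u ∧ b = v) := by
        rintro ⟨rfl, rfl⟩
        exact hni ⟨[], r, rfl⟩
      have h2 : ¬ ([u, v] <:+: b :: r) := fun hi =>
        hni (hi.trans ((b :: r).suffix_cons a).isInfix)
      rw [pw_cons_cons, pw_cons_cons, h.weight_eq a b h1, pw_eq_of_not_infix h h2]

theorem chain'_mono (h : IsUpdate G G' u v) {p : List V} (hc : List.Chain' G.E p) :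
    List.Chain' G'.E p :=
  hc.imp fun a b hab => (h.edge_iff a b).2 (Or.inl hab)

theorem chain'_of_not_infix (h : IsUpdate G G' u v) :
    ∀ {p : List V}, ¬ ([u, v] <:+: p) → List.Chain' G'.E p → List.Chain' G.E p
  | [], _, _ => List.isChain_nil
  | [_], _, _ => List.isChain_singleton _
  | a :: b :: r, hni, hc => by
      simp only [List.Chain', List.isChain_cons_cons] at hc ⊢
      have h1 : ¬ (a = u ∧ b = v) := by
        rintro ⟨rfl, rfl⟩
        exact hni ⟨[], r, rfl⟩
      have h2 : ¬ ([u, v] <:+: b :: r) := fun hi =>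
        hni (hi.trans ((b :: r).suffix_cons a).isInfix)
      refine ⟨?_, chain'_of_not_infix h h2 hc.2⟩
      rcases (h.edge_iff a b).1 hc.1 with he | he
      · exact he
      · exact absurd he h1

theorem isPath_of_not_infix (h : IsUpdate G G' u v) {p : List V}
    (hni : ¬ ([u, v] <:+: p)) (hp : G'.IsPath s t p) : G.IsPath s t p :=
  ⟨chain'_of_not_infix h hni hp.1, hp.2.1, hp.2.2.1, hp.2.2.2⟩

theorem isPath_mono (h : IsUpdate G G' u v) {p : List V} (hp : G.IsPath s t p) :
    G'.IsPath s t p :=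
  ⟨chain'_mono h hp.1, hp.2.1, hp.2.2.1, hp.2.2.2⟩

theorem path_split {H : WDigraph V} {s t u v : V} {p : List V}
    (hp : H.IsPath s t p) (hi : [u, v] <:+: p) :
    ∃ p₁ p₂, p = p₁ ++ p₂ ∧ H.IsPath s u p₁ ∧ H.IsPath v t p₂ ∧ p₁.Disjoint p₂ ∧
      H.pw p = H.pw p₁ + H.w u v + H.pw p₂ := by
  obtain ⟨l₁, l₂, hp'⟩ := hi
  obtain ⟨hc, hhead, hlast, hnd⟩ := hp
  have hpe : p = (l₁ ++ [u]) ++ (v :: l₂) := by rw [← hp']; simp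
  rw [hpe] at hc hhead hlast hnd
  have hcs := List.isChain_append.1 hc
  have h1last : (l₁ ++ [u]).getLast? = some u := List.getLast?_concat
  have h2head : (v :: l₂).head? = some v := rfl
  have h1head : (l₁ ++ [u]).head? = some s := by
    rw [List.head?_append_of_ne_nil _ (by simp)] at hhead
    exact hhead
  have h2last : (v :: l₂).getLast? = some t := by
    rw [List.getLast?_append_cons] at hlast
    exact hlast
  have hnds := List.nodup_append.1 hnd
  refine ⟨l₁ ++ [u], v :: l₂, hpe, ⟨hcs.1, h1head, h1last, hnds.1⟩,
    ⟨hcs.2.1, h2head, h2last, hnds.2.1⟩, List.disjoint_iff_ne.2 hnds.2.2, ?_⟩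
  rw [hpe, H.pw_append h1last h2head]

theorem path_join {H : WDigraph V} {s t u v : V} {p₁ p₂ : List V}
    (hp₁ : H.IsPath s u p₁) (hp₂ : H.IsPath v t p₂)
    (hd : p₁.Disjoint p₂) (he : H.E u v) :
    H.IsPath s t (p₁ ++ p₂) ∧ [u, v] <:+: (p₁ ++ p₂) ∧
      H.pw (p₁ ++ p₂) = H.pw p₁ + H.w u v + H.pw p₂ := by
  obtain ⟨hc₁, hh₁, hl₁, hn₁⟩ := hp₁
  obtain ⟨hc₂, hh₂, hl₂, hn₂⟩ := hp₂
  obtain ⟨a, rfl⟩ := List.getLast?_eq_some_iff.1 hl₁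
  obtain ⟨r, rfl⟩ := List.head?_eq_some_iff.1 hh₂
  refine ⟨⟨?_, ?_, ?_, ?_⟩, ⟨a, r, by simp⟩, H.pw_append hl₁ hh₂⟩
  · refine List.isChain_append.2 ⟨hc₁, hc₂, ?_⟩
    intro z hz w hw
    simp only [Option.mem_def] at hz hw
    rw [hl₁] at hz
    rw [hh₂] at hw
    cases hz; cases hw
    exact he
  · rw [List.head?_append_of_ne_nil _ (by simp)]
    exact hh₁
  · rw [List.getLast?_append_cons]
    exact hl₂
  · exact List.nodup_append.2 ⟨hn₁, hn₂, List.disjoint_iff_ne.1 hd⟩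

theorem unique_split {u : V} :
    ∀ (a c b d : List V), a ++ u :: b = c ++ u :: d → u ∉ a → u ∉ c → a = c ∧ b = d := by
  intro a
  induction a with
  | nil =>
    intro c b d h hu hc
    cases c with
    | nil => simpa using h
    | cons z c' =>
      simp only [List.nil_append, List.cons_append, List.cons.injEq] at h
      exact absurd (by rw [h.1]; exact List.mem_cons_self) hc
  | cons z a' ih =>
    intro c b d h hu hc
    cases c with
    | nil =>
      simp only [List.cons_append, List.nil_append, List.cons.injEq] at h
      exact absurd (by rw [← h.1]; exact List.mem_cons_self) hu
    | cons w c' =>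
      simp only [List.cons_append, List.cons.injEq] at h
      obtain ⟨rfl, h2⟩ := h
      have := ih c' b d h2 (fun hm => hu (List.mem_cons_of_mem _ hm))
        (fun hm => hc (List.mem_cons_of_mem _ hm))
      exact ⟨by rw [this.1], this.2⟩

theorem concat_inj {u v : V} {p₁ p₂ q₁ q₂ : List V} (he : p₁ ++ p₂ = q₁ ++ q₂)
    (h1 : p₁.getLast? = some u) (g1 : q₁.getLast? = some u)
    (hn : (p₁ ++ p₂).Nodup) : p₁ = q₁ ∧ p₂ = q₂ := by
  obtain ⟨a, rfl⟩ := List.getLast?_eq_some_iff.1 h1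
  obtain ⟨c, rfl⟩ := List.getLast?_eq_some_iff.1 g1
  have hua : u ∉ a := by
    have h3 := (List.nodup_append.1 (List.nodup_append.1 hn).1).2.2
    intro hm
    exact h3 u hm u (List.mem_singleton_self u) rfl
  have hnq : ((c ++ [u]) ++ q₂).Nodup := he ▸ hn
  have huc : u ∉ c := by
    have h3 := (List.nodup_append.1 (List.nodup_append.1 hnq).1).2.2
    intro hm
    exact h3 u hm u (List.mem_singleton_self u) rfl
  have he' : a ++ u :: p₂ = c ++ u :: q₂ := by simpa [List.append_assoc] using he
  obtain ⟨rfl, rfl⟩ := unique_split a c p₂ q₂ he' hua huc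
  exact ⟨rfl, rfl⟩

theorem dist_ne_bot (G : WDigraph V) (s t : V) : G.dist s t ≠ ⊥ := by
  by_cases hex : ∃ p, G.IsPath s t p
  · obtain ⟨p, hp⟩ := hex
    obtain ⟨q, hq⟩ := G.exists_sp hp
    rw [sp_dist hq]
    exact EReal.coe_ne_bot _
  · rw [G.dist_eq_top fun p hp => hex ⟨p, hp⟩]
    simp

theorem comp_lt_top {x y : EReal} {r : ℝ} (hx : x ≠ ⊥) (hy : y ≠ ⊥)
    (h : x + (r : EReal) + y < ⊤) : x < ⊤ ∧ y < ⊤ := by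
  constructor
  · rcases lt_or_eq_of_le (le_top : x ≤ ⊤) with h' | h'
    · exact h'
    · exfalso
      rw [h', EReal.top_add_of_ne_bot (EReal.coe_ne_bot r), EReal.top_add_of_ne_bot hy] at h
      exact lt_irrefl _ h
  · rcases lt_or_eq_of_le (le_top : y ≤ ⊤) with h' | h'
    · exact h'
    · exfalso
      have hxr : x + (r : EReal) ≠ ⊥ := by
        rw [Ne, EReal.add_eq_bot_iff]
        push_neg
        exact ⟨hx, EReal.coe_ne_bot r⟩
      rw [h', EReal.add_top_of_ne_bot hxr] at h
      exact lt_irrefl _ h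

theorem not_infix_pair {p₁ p₂ : List V} (hl : p₁.getLast? = some u) (hh : p₂.head? = some v)
    (hd : p₁.Disjoint p₂) : ¬ ([u, v] <:+: p₁) ∧ ¬ ([u, v] <:+: p₂) := by
  constructor
  · intro hi
    obtain ⟨ys, rfl⟩ := List.head?_eq_some_iff.1 hh
    exact hd (hi.subset (by simp)) (List.mem_cons_self)
  · intro hi
    obtain ⟨ys, rfl⟩ := List.getLast?_eq_some_iff.1 hl
    exact hd (List.mem_append_right _ (List.mem_singleton_self u)) (hi.subset (by simp))

theorem spB (h : IsUpdate G G' u v) {s t : V} {p : List V}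
    (hp : G'.IsPath s t p) (hi : [u, v] <:+: p) :
    ∃ p₁ p₂, p = p₁ ++ p₂ ∧ G.IsPath s u p₁ ∧ G.IsPath v t p₂ ∧ p₁.Disjoint p₂ ∧
      G'.pw p = G.pw p₁ + G'.w u v + G.pw p₂ := by
  obtain ⟨p₁, p₂, rfl, hp₁, hp₂, hdisj, hw⟩ := path_split hp hi
  have hni := not_infix_pair hp₁.2.2.1 hp₂.2.1 hdisj
  exact ⟨p₁, p₂, rfl, isPath_of_not_infix h hni.1 hp₁, isPath_of_not_infix h hni.2 hp₂, hdisj,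
    by rw [hw, pw_eq_of_not_infix h hni.1, pw_eq_of_not_infix h hni.2]⟩

theorem pw'_ge (h : IsUpdate G G' u v) {s t : V} {p : List V} (hp : G'.IsPath s t p) :
    G.dist s t ≤ (G'.pw p : EReal) ∨
      G.dist s u + (G'.w u v : EReal) + G.dist v t ≤ (G'.pw p : EReal) := by
  by_cases hi : [u, v] <:+: p
  · right
    obtain ⟨p₁, p₂, rfl, h1, h2, hd, hw⟩ := spB h hp hi
    rw [hw, EReal.coe_add, EReal.coe_add]
    exact add_le_add (add_le_add (G.dist_le h1) le_rfl) (G.dist_le h2)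
  · left
    rw [pw_eq_of_not_infix h hi]
    exact G.dist_le (isPath_of_not_infix h hi hp)

theorem dist'_ge (h : IsUpdate G G' u v) (s t : V) :
    min (G.dist s t) (G.dist s u + (G'.w u v : EReal) + G.dist v t) ≤ G'.dist s t := by
  refine le_sInf ?_
  rintro x ⟨p, hp, rfl⟩
  rcases pw'_ge h hp with h1 | h1
  · exact (min_le_left _ _).trans h1
  · exact (min_le_right _ _).trans h1

/-- If `D ≤ d(s,t)` then any shortest `s-u` path and shortest `v-t` path are disjoint. -/
theorem sp_disjoint (h : IsUpdate G G' u v) {s t : V}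
    (hle : G.dist s u + (G'.w u v : EReal) + G.dist v t ≤ G.dist s t)
    {p₁ p₂ : List V} (hp₁ : p₁ ∈ G.SP s u) (hp₂ : p₂ ∈ G.SP v t) :
    p₁.Disjoint p₂ := by
  intro x hx hx2
  obtain ⟨⟨hc₁, hh₁, hl₁, hn₁⟩, hw₁⟩ := hp₁
  obtain ⟨⟨hc₂, hh₂, hl₂, hn₂⟩, hw₂⟩ := hp₂
  obtain ⟨a, b, rfl⟩ := List.append_of_mem hx
  obtain ⟨c, e, rfl⟩ := List.append_of_mem hx2
  have hca := (List.isChain_append (R := G.E) (l₁ := a) (l₂ := x :: b)).1 hc₁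
  have hce := (List.isChain_append (R := G.E) (l₁ := c) (l₂ := x :: e)).1 hc₂
  have hcW : List.Chain' G.E (a ++ x :: e) := by
    refine List.isChain_append.2 ⟨hca.1, hce.2.1, ?_⟩
    intro z hz w hw
    simp only [List.head?_cons, Option.mem_def, Option.some.injEq] at hw
    subst hw
    exact hca.2.2 z hz x rfl
  have hWs : (a ++ x :: e).head? = some s := by
    cases a with
    | nil => simpa using hh₁
    | cons a0 a' => simpa using hh₁
  have hWt : (a ++ x :: e).getLast? = some t := by
    rw [List.getLast?_append_cons] at hl₂ ⊢
    exact hl₂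
  obtain ⟨q, hq, hqle⟩ := G.exists_path_le (a ++ x :: e).length (a ++ x :: e) le_rfl hcW hWs hWt
  have hdq : G.dist s t ≤ (G.pw q : EReal) := G.dist_le hq
  -- weight bounds
  have e₁ : G.pw (a ++ x :: b) = G.pw (a ++ [x]) + G.pw (x :: b) := pw_append_cons G a x b
  have e₂ : G.pw (c ++ x :: e) = G.pw (c ++ [x]) + G.pw (x :: e) := pw_append_cons G c x e
  have eW : G.pw (a ++ x :: e) = G.pw (a ++ [x]) + G.pw (x :: e) := pw_append_cons G a x e
  have hb0 : 0 ≤ G.pw (x :: b) := pw_nonneg G hca.2.1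
  have hc0 : 0 ≤ G.pw (c ++ [x]) := pw_nonneg G (hc₂.prefix ⟨e, by simp⟩)
  -- contradiction via hle
  have hch : ((G.pw (a ++ x :: b) : EReal)) + (G'.w u v : EReal) + (G.pw (c ++ x :: e) : EReal)
      ≤ (G.pw q : EReal) := by
    rw [hw₁, hw₂]
    exact hle.trans hdq
  have hreal : G.pw (a ++ x :: b) + G'.w u v + G.pw (c ++ x :: e) ≤ G.pw q :=
    EReal.coe_le_coe_iff.1 (by rw [EReal.coe_add, EReal.coe_add]; exact hch)
  have hwpos := h.w_pos
  nlinarith [hqle, e₁, e₂, eW, hb0, hc0]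

/-- If `d(s,t) ≤ D` then no shortest `s-t` path in `G` uses the (updated) edge `(u,v)`. -/
theorem sp_no_infix (h : IsUpdate G G' u v) {s t : V}
    (hd : G.dist s t ≤ G.dist s u + (G'.w u v : EReal) + G.dist v t)
    {p : List V} (hp : p ∈ G.SP s t) : ¬ ([u, v] <:+: p) := by
  intro hi
  have heuv : G.E u v := (List.isChain_cons_cons.1 (hp.1.1.infix hi)).1
  rcases h.insert_or_decrease with hins | ⟨_, hdec⟩
  · exact hins heuv
  obtain ⟨p₁, p₂, hpe, h1, h2, hdisj, hw⟩ := path_split hp.1 hi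
  obtain ⟨q₁, hq₁⟩ := G.dist_lt_top_iff.1 ((G.dist_le h1).trans_lt (EReal.coe_lt_top _))
  obtain ⟨q₂, hq₂⟩ := G.dist_lt_top_iff.1 ((G.dist_le h2).trans_lt (EReal.coe_lt_top _))
  have hr₁ : G.pw q₁ ≤ G.pw p₁ := by
    have := G.dist_le h1
    rw [sp_dist hq₁] at this
    exact_mod_cast this
  have hr₂ : G.pw q₂ ≤ G.pw p₂ := by
    have := G.dist_le h2
    rw [sp_dist hq₂] at this
    exact_mod_cast this
  have hd2 : G.pw p ≤ G.pw q₁ + G'.w u v + G.pw q₂ := by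
    have h3 := hd
    rw [sp_dist hq₁, sp_dist hq₂, ← hp.2, ← EReal.coe_add, ← EReal.coe_add] at h3
    exact_mod_cast h3
  rw [hw] at hd2
  linarith [hdec]

theorem setA_eq (h : IsUpdate G G' u v) {s t : V}
    (hd : G.dist s t ≤ G.dist s u + (G'.w u v : EReal) + G.dist v t)
    (hd' : G'.dist s t = G.dist s t) :
    {p ∈ G'.SP s t | ¬ ([u, v] <:+: p)} = G.SP s t := by
  ext p
  constructor
  · rintro ⟨⟨hp, hw⟩, hni⟩
    refine ⟨isPath_of_not_infix h hni hp, ?_⟩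
    rw [← pw_eq_of_not_infix h hni, hw, hd']
  · intro hp
    have hni := sp_no_infix h hd hp
    exact ⟨⟨isPath_mono h hp.1, by rw [pw_eq_of_not_infix h hni, hp.2, ← hd']⟩, hni⟩

theorem setB_eq (h : IsUpdate G G' u v) {s t : V}
    (hDle : G.dist s u + (G'.w u v : EReal) + G.dist v t ≤ G.dist s t)
    (hd' : G'.dist s t = G.dist s u + (G'.w u v : EReal) + G.dist v t) :
    {p ∈ G'.SP s t | [u, v] <:+: p}
      = (fun q : List V × List V => q.1 ++ q.2) '' (G.SP s u ×ˢ G.SP v t) := by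
  ext p
  constructor
  · rintro ⟨⟨hp, hw⟩, hi⟩
    obtain ⟨p₁, p₂, rfl, h1, h2, hdisj, hwe⟩ := spB h hp hi
    obtain ⟨q₁, hq₁⟩ := G.dist_lt_top_iff.1 ((G.dist_le h1).trans_lt (EReal.coe_lt_top _))
    obtain ⟨q₂, hq₂⟩ := G.dist_lt_top_iff.1 ((G.dist_le h2).trans_lt (EReal.coe_lt_top _))
    have hr₁ : G.pw q₁ ≤ G.pw p₁ := by
      have := G.dist_le h1
      rw [sp_dist hq₁] at this
      exact_mod_cast this
    have hr₂ : G.pw q₂ ≤ G.pw p₂ := by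
      have := G.dist_le h2
      rw [sp_dist hq₂] at this
      exact_mod_cast this
    have hsum : G.pw p₁ + G'.w u v + G.pw p₂ = G.pw q₁ + G'.w u v + G.pw q₂ := by
      have h3 : (((G.pw p₁ + G'.w u v + G.pw p₂ : ℝ)) : EReal)
          = ((G.pw q₁ + G'.w u v + G.pw q₂ : ℝ) : EReal) := by
        calc ((G.pw p₁ + G'.w u v + G.pw p₂ : ℝ) : EReal)
            = ((G'.pw (p₁ ++ p₂) : ℝ) : EReal) := by rw [hwe]
          _ = G'.dist s t := hw
          _ = G.dist s u + (G'.w u v : EReal) + G.dist v t := hd'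
          _ = ((G.pw q₁ + G'.w u v + G.pw q₂ : ℝ) : EReal) := by
              rw [sp_dist hq₁, sp_dist hq₂, EReal.coe_add, EReal.coe_add]
      exact_mod_cast h3
    have hpw₁ : G.pw p₁ = G.pw q₁ := by linarith
    have hpw₂ : G.pw p₂ = G.pw q₂ := by linarith
    refine ⟨(p₁, p₂), Set.mem_prod.2 ⟨⟨h1, ?_⟩, ⟨h2, ?_⟩⟩, rfl⟩
    · rw [sp_dist hq₁, hpw₁]
    · rw [sp_dist hq₂, hpw₂]
  · rintro ⟨⟨p₁, p₂⟩, hmem, rfl⟩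
    obtain ⟨h1, h2⟩ := Set.mem_prod.1 hmem
    have hdisj := sp_disjoint h hDle h1 h2
    obtain ⟨hp, hi, hw⟩ := path_join (isPath_mono h h1.1) (isPath_mono h h2.1) hdisj h.edge'
    have hni := not_infix_pair h1.1.2.2.1 h2.1.2.1 hdisj
    refine ⟨⟨hp, ?_⟩, hi⟩
    show ((G'.pw (p₁ ++ p₂) : ℝ) : EReal) = G'.dist s t
    rw [hw, pw_eq_of_not_infix h hni.1, pw_eq_of_not_infix h hni.2, hd',
      EReal.coe_add, EReal.coe_add, ← sp_dist h1, ← sp_dist h2]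

theorem injOn_concat (h : IsUpdate G G' u v) {s t : V}
    (hDle : G.dist s u + (G'.w u v : EReal) + G.dist v t ≤ G.dist s t) :
    Set.InjOn (fun q : List V × List V => q.1 ++ q.2) (G.SP s u ×ˢ G.SP v t) := by
  rintro ⟨p₁, p₂⟩ hp ⟨q₁, q₂⟩ hq he
  obtain ⟨hp1, hp2⟩ := Set.mem_prod.1 hp
  obtain ⟨hq1, hq2⟩ := Set.mem_prod.1 hq
  have hd₁ := sp_disjoint h hDle hp1 hp2
  have hn : (p₁ ++ p₂).Nodup := List.nodup_append.2 ⟨hp1.1.2.2.2, hp2.1.2.2.2, List.disjoint_iff_ne.1 hd₁⟩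
  obtain ⟨e1, e2⟩ := concat_inj (u := u) (v := v) he hp1.1.2.2.1 hq1.1.2.2.1 hn
  exact Prod.ext e1 e2

theorem ncard_prod' {α β : Type*} (s : Set α) (t : Set β) :
    (s ×ˢ t).ncard = s.ncard * t.ncard := by
  rw [← Nat.card_coe_set_eq, ← Nat.card_coe_set_eq, ← Nat.card_coe_set_eq,
    Nat.card_congr (Equiv.Set.prod s t), Nat.card_prod]

theorem dist'_eq_D (h : IsUpdate G G' u v) {s t : V}
    (hDle : G.dist s u + (G'.w u v : EReal) + G.dist v t ≤ G.dist s t)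
    (hDlt : G.dist s u + (G'.w u v : EReal) + G.dist v t < ⊤) :
    G'.dist s t = G.dist s u + (G'.w u v : EReal) + G.dist v t := by
  obtain ⟨hsu, hvt⟩ := comp_lt_top (G.dist_ne_bot s u) (G.dist_ne_bot v t) hDlt
  obtain ⟨q₁, hq₁⟩ := G.dist_lt_top_iff.1 hsu
  obtain ⟨q₂, hq₂⟩ := G.dist_lt_top_iff.1 hvt
  have hdisj := sp_disjoint h hDle hq₁ hq₂
  obtain ⟨hp', hi, hw⟩ := path_join (isPath_mono h hq₁.1) (isPath_mono h hq₂.1) hdisj h.edge'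
  have hni := not_infix_pair hq₁.1.2.2.1 hq₂.1.2.1 hdisj
  have hwD : ((G'.pw (q₁ ++ q₂) : ℝ) : EReal)
      = G.dist s u + (G'.w u v : EReal) + G.dist v t := by
    rw [hw, pw_eq_of_not_infix h hni.1, pw_eq_of_not_infix h hni.2, EReal.coe_add,
      EReal.coe_add, ← sp_dist hq₁, ← sp_dist hq₂]
  refine le_antisymm ?_ ?_
  · rw [← hwD]
    exact G'.dist_le hp'
  · have hge := dist'_ge h s t
    rwa [min_eq_right hDle] at hge

theorem dist'_eq_dist (h : IsUpdate G G' u v) {s t : V}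
    (hdle : G.dist s t ≤ G.dist s u + (G'.w u v : EReal) + G.dist v t)
    (hdlt : G.dist s t < ⊤) : G'.dist s t = G.dist s t := by
  obtain ⟨p, hp⟩ := G.dist_lt_top_iff.1 hdlt
  have hni := sp_no_infix h hdle hp
  refine le_antisymm ?_ ?_
  · have hle := G'.dist_le (isPath_mono h hp.1)
    rwa [pw_eq_of_not_infix h hni, hp.2] at hle
  · have hge := dist'_ge h s t
    rwa [min_eq_left hdle] at hge

end Aux

/-- For all `s, t ∈ V` with `s ≠ t`, writing
`d*(s,t) = d(s,u) + ω'(u,v) + d(v,t)`, the new number of shortest paths satisfies: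
if `d*(s,t) < d(s,t)` then `σ'_{st} = σ_{su} · σ_{vt}`;
if `d*(s,t) = d(s,t) < ∞` then `σ'_{st} = σ_{st} + σ_{su} · σ_{vt}`;
and if `d*(s,t) > d(s,t)` then `σ'_{st} = σ_{st}`. -/
theorem sigma'_trichotomy (G G' : WDigraph V) (u v : V)
    (h : IsUpdate G G' u v) (s t : V) (hst : s ≠ t) :
    (G.dist s u + (G'.w u v : EReal) + G.dist v t < G.dist s t →
        G'.sigma s t = G.sigma s u * G.sigma v t) ∧
    (G.dist s u + (G'.w u v : EReal) + G.dist v t = G.dist s t ∧ G.dist s t < ⊤ →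
        G'.sigma s t = G.sigma s t + G.sigma s u * G.sigma v t) ∧
    (G.dist s u + (G'.w u v : EReal) + G.dist v t > G.dist s t →
        G'.sigma s t = G.sigma s t) := by
  classical
  set A : Set (List V) := {p ∈ G'.SP s t | ¬ ([u, v] <:+: p)} with hA
  set B : Set (List V) := {p ∈ G'.SP s t | [u, v] <:+: p} with hB
  have hAfin : A.Finite := (G'.sp_finite s t).subset fun p hp => hp.1
  have hBfin : B.Finite := (G'.sp_finite s t).subset fun p hp => hp.1
  have hsig : G'.sigma s t = A.ncard + B.ncard := by
    have hu2 : G'.SP s t = A ∪ B := by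
      ext p
      constructor
      · intro hp
        by_cases hi : [u, v] <:+: p
        · exact Or.inr ⟨hp, hi⟩
        · exact Or.inl ⟨hp, hi⟩
      · rintro (⟨hp, _⟩ | ⟨hp, _⟩) <;> exact hp
    have hdisjAB : Disjoint A B := Set.disjoint_left.2 fun p hp hq => hp.2 hq.2
    rw [sigma, hu2, Set.ncard_union_eq hdisjAB hAfin hBfin]
  refine ⟨?_, ?_, ?_⟩
  · -- Case 1 : D < d
    intro hlt
    have hDle : G.dist s u + (G'.w u v : EReal) + G.dist v t ≤ G.dist s t := hlt.le
    have hDlt : G.dist s u + (G'.w u v : EReal) + G.dist v t < ⊤ := lt_of_lt_of_le hlt le_top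
    have hd' := dist'_eq_D h hDle hDlt
    have hAeq : A = ∅ := by
      ext p
      simp only [hA, Set.mem_sep_iff, Set.mem_empty_iff_false, iff_false, not_and]
      rintro ⟨hp, hwp⟩ hni
      have hgp := isPath_of_not_infix h hni hp
      have hle : G.dist s t ≤ ((G'.pw p : ℝ) : EReal) := by
        rw [pw_eq_of_not_infix h hni]
        exact G.dist_le hgp
      rw [hwp, hd'] at hle
      exact absurd hle (not_le.2 hlt)
    have hBeq : B = (fun q : List V × List V => q.1 ++ q.2) '' (G.SP s u ×ˢ G.SP v t) := by
      rw [hB]; exact setB_eq h hDle hd'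
    rw [hsig, hAeq, Set.ncard_empty, hBeq,
      Set.ncard_image_of_injOn (injOn_concat h hDle), ncard_prod']
    simp [sigma]
  · -- Case 2 : D = d < ⊤
    rintro ⟨heq, hdlt⟩
    have hd' := dist'_eq_D h heq.le (heq.trans_lt hdlt)
    have hAeq : A = G.SP s t := setA_eq h heq.ge (hd'.trans heq)
    have hBeq : B = (fun q : List V × List V => q.1 ++ q.2) '' (G.SP s u ×ˢ G.SP v t) := by
      rw [hB]; exact setB_eq h heq.le hd'
    rw [hsig, hAeq, hBeq, Set.ncard_image_of_injOn (injOn_concat h heq.le), ncard_prod']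
    simp [sigma]
  · -- Case 3 : D > d
    intro hgt
    have hdle : G.dist s t ≤ G.dist s u + (G'.w u v : EReal) + G.dist v t := hgt.le
    have hdlt : G.dist s t < ⊤ := lt_of_lt_of_le hgt le_top
    have hd' := dist'_eq_dist h hdle hdlt
    have hAeq : A = G.SP s t := setA_eq h hdle hd'
    have hBeq : B = ∅ := by
      ext p
      simp only [hB, Set.mem_sep_iff, Set.mem_empty_iff_false, iff_false, not_and]
      rintro ⟨hp, hwp⟩ hi
      obtain ⟨p₁, p₂, rfl, h1, h2, hdisj, hwe⟩ := spB h hp hi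
      have hDb : G.dist s u + (G'.w u v : EReal) + G.dist v t
          ≤ ((G'.pw (p₁ ++ p₂) : ℝ) : EReal) := by
        rw [hwe, EReal.coe_add, EReal.coe_add]
        exact add_le_add (add_le_add (G.dist_le h1) le_rfl) (G.dist_le h2)
      rw [hwp, hd'] at hDb
      exact absurd hDb (not_le.2 hgt)
    rw [hsig, hAeq, hBeq, Set.ncard_empty]
    simp [sigma]


end WDigraph
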